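/- Let k be an integral domain of characteristic 0 with a nonzero element λ, and b_0 ∈ k. Let A = ⊕ k z_i with product z_m z_n = Σ_{j=0}^{m} C(m+n-j,n)C(n,j)λ^j z_{m+n-j}, and (R, P) = (A/I_2, P̄) where I_2 = ⊕_{i≥2} k z_i and P̄(z̄_0) = z̄_1, P̄(z̄_1) = 0. Define P̃ on R^ℕ recursively by P̃(f)_0 = P̄(f_0) and P̃(f)_{n+1} = b_0 P̃(f)_n + P̃(∂f)_n. If P̃ is a Rota-Baxter operator of weight λ on the λ-Hurwitz series algebra R^ℕ, then b_0 = 0. -/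

import Mathlib

open Finset

/-- The λ-Hurwitz product on sequences. -/
def hmul {K R : Type*} [CommRing K] [CommRing R] [Algebra K R] (lam : K) (f g : ℕ → R) :
    ℕ → R :=
  fun n => ∑ i ∈ range (n + 1), ∑ j ∈ range (n - i + 1),
    (n.choose i * (n - i).choose j) • (lam ^ i • (f (n - j) * g (i + j)))

/-- The shift operator ∂(f)_n = f_{n+1}. -/
def der {R : Type*} (f : ℕ → R) : ℕ → R := fun n => f (n + 1)

/-- The cover of P determined by P̃(f)_0 = P(f_0) and P̃(f)_{n+1} = b_0 P̃(f)_n + P̃(∂f)_n. -/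
def cov17 {K R : Type*} [CommRing K] [CommRing R] [Algebra K R]
    (P : R → R) (b0 : K) : ℕ → (ℕ → R) → R
  | 0, f => P (f 0)
  | n + 1, f => b0 • cov17 P b0 n f + cov17 P b0 n (der f)

set_option maxRecDepth 4000 in
lemma aux17 {K : Type*} [CommRing K] [IsDomain K] [CharZero K]
    (lam : K) (hlam : lam ≠ 0) (b0 : K)
    {R : Type*} [CommRing R] [Algebra K R] (r : R) (hr2 : r * r = lam • r)
    (φ : R →ₐ[K] K) (hφr : φ r = lam)
    (Pb : R →ₗ[K] R) (hPb0 : Pb 1 = r) (hPb1 : Pb r = 0)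
    (hRB : ∀ f g : ℕ → R,
      hmul lam (fun n => cov17 (K := K) Pb b0 n f) (fun n => cov17 (K := K) Pb b0 n g)
        = (fun n => cov17 (K := K) Pb b0 n
            (hmul lam (fun m => cov17 (K := K) Pb b0 m f) g))
          + (fun n => cov17 (K := K) Pb b0 n
              (hmul lam f (fun m => cov17 (K := K) Pb b0 m g)))
          + lam • (fun n => cov17 (K := K) Pb b0 n (hmul lam f g))) :
    b0 = 0 := by
  classical
  set f : ℕ → R := fun n => if n = 1 then 1 else 0 with hf
  set g : ℕ → R := fun n => if n = 0 then 1 else 0 with hg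
  have hfc0 : cov17 (K := K) Pb b0 0 f = 0 := by simp [cov17, hf]
  have hfc1 : cov17 (K := K) Pb b0 1 f = r := by simp [cov17, der, hf, hPb0]
  have hgc0 : cov17 (K := K) Pb b0 0 g = r := by simp [cov17, hg, hPb0]
  have hgc1 : cov17 (K := K) Pb b0 1 g = b0 • r := by simp [cov17, der, hg, hPb0]
  have h := congrFun (hRB f g) 1
  have hexp : ∀ F G : ℕ → R, hmul lam F G 1
      = F 1 * G 0 + F 0 * G 1 + lam • (F 1 * G 1) := by
    intro F G
    simp [hmul, Finset.sum_range_succ]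
  have hexp0 : ∀ F G : ℕ → R, hmul lam F G 0 = F 0 * G 0 := by
    intro F G
    simp [hmul]
  have hcov1 : ∀ F : ℕ → R,
      cov17 (K := K) Pb b0 1 F = b0 • Pb (F 0) + Pb (F 1) := by
    intro F; simp [cov17, der]
  simp only [Pi.add_apply, Pi.smul_apply, hcov1, hexp, hexp0] at h
  simp only [hfc0, hfc1, hgc0, hgc1] at h
  simp only [hf, hg] at h
  norm_num [hr2, hPb0, hPb1, smul_smul, map_smul, smul_add] at h
  have h2 := congrArg φ h
  simp only [map_add, map_smul, hφr, map_zero, smul_eq_mul] at h2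
  have h3 : b0 * (lam * lam * lam) = 0 := by linear_combination h2
  rcases mul_eq_zero.mp h3 with h4 | h4
  · exact h4
  · exact absurd h4 (mul_ne_zero (mul_ne_zero hlam hlam) hlam)

/-- Let K be a domain of characteristic 0 with λ ≠ 0, and let R = A/I₂ be the
quotient of the free Rota-Baxter algebra on K, i.e. R = K[x]/(x² - λx) with
z̄₀ = 1, z̄₁ = x̄, and Rota-Baxter operator P̄(z̄₀) = z̄₁, P̄(z̄₁) = 0. If the cover
P̃ with recursion P̃(f)_{n+1} = b₀ P̃(f)_n + P̃(∂f)_n is a Rota-Baxter operator of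
weight λ on the λ-Hurwitz series algebra R^ℕ, then b₀ = 0. -/
theorem stmt17 {K : Type*} [CommRing K] [IsDomain K] [CharZero K]
    (lam : K) (hlam : lam ≠ 0) (b0 : K)
    (Pb : AdjoinRoot (Polynomial.X ^ 2 - Polynomial.C lam * Polynomial.X)
      →ₗ[K] AdjoinRoot (Polynomial.X ^ 2 - Polynomial.C lam * Polynomial.X))
    (hPb0 : Pb 1 = AdjoinRoot.root (Polynomial.X ^ 2 - Polynomial.C lam * Polynomial.X))
    (hPb1 : Pb (AdjoinRoot.root (Polynomial.X ^ 2 - Polynomial.C lam * Polynomial.X)) = 0)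
    (hRB : ∀ f g : ℕ → AdjoinRoot (Polynomial.X ^ 2 - Polynomial.C lam * Polynomial.X),
      hmul lam (fun n => cov17 (K := K) Pb b0 n f) (fun n => cov17 (K := K) Pb b0 n g)
        = (fun n => cov17 (K := K) Pb b0 n
            (hmul lam (fun m => cov17 (K := K) Pb b0 m f) g))
          + (fun n => cov17 (K := K) Pb b0 n
              (hmul lam f (fun m => cov17 (K := K) Pb b0 m g)))
          + lam • (fun n => cov17 (K := K) Pb b0 n (hmul lam f g))) :
    b0 = 0 := by
  have haev : (Polynomial.aeval lam)
      (Polynomial.X ^ 2 - Polynomial.C lam * Polynomial.X) = 0 := by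
    simp [pow_two]
  have hr2 : AdjoinRoot.root (Polynomial.X ^ 2 - Polynomial.C lam * Polynomial.X) *
      AdjoinRoot.root (Polynomial.X ^ 2 - Polynomial.C lam * Polynomial.X)
      = lam • AdjoinRoot.root (Polynomial.X ^ 2 - Polynomial.C lam * Polynomial.X) := by
    have h0 := AdjoinRoot.eval₂_root (Polynomial.X ^ 2 - Polynomial.C lam * Polynomial.X)
    rw [Polynomial.eval₂_sub, Polynomial.eval₂_mul, Polynomial.eval₂_pow, Polynomial.eval₂_X,
      Polynomial.eval₂_C, sub_eq_zero] at h0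
    rw [← pow_two, h0, Algebra.smul_def]
    rfl
  exact aux17 lam hlam b0 _ hr2 (AdjoinRoot.liftAlgHom _ (Algebra.ofId K K) lam haev)
    (AdjoinRoot.liftAlgHom_root _ _ _ haev) Pb hPb0 hPb1 hRB
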